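/- If g is a nondegenerate symmetric bilinear form on V, then the endomorphism 𝒥_g of E satisfies 𝒥_g ∘ 𝒥_g = -id_E and G₀(𝒥_g u, v) = G₀(u, 𝒥_g v) for all u, v ∈ E; in particular, if V ≠ 0 then 𝒥_g is not strong, i.e. it is not the case that G₀(𝒥_g u, v) = -G₀(u, 𝒥_g v) for all u, v ∈ E. -/

import Mathlib

noncomputable section

variable {V : Type*} [AddCommGroup V] [Module ℝ V] [FiniteDimensional ℝ V]

/-- The canonical pairing `G₀` on `E = V × V*`. -/
def Gz (u v : V × Module.Dual ℝ V) : ℝ := (u.2 v.1 + v.2 u.1) / 2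

/-- The musical isomorphism `♯_h = (♭_h)⁻¹` of a nondegenerate bilinear form `h`. -/
def sharp (h : LinearMap.BilinForm ℝ V) (hh : h.Nondegenerate) : Module.Dual ℝ V →ₗ[ℝ] V :=
  (LinearMap.BilinForm.toDual h hh).symm

/-- The endomorphism `𝒥_h` of `E = V × V*`, `𝒥_h(X,ξ) = (-♯_h ξ, ♭_h X)`. -/
def Jform (h : LinearMap.BilinForm ℝ V) (hh : h.Nondegenerate)
    (u : V × Module.Dual ℝ V) : V × Module.Dual ℝ V :=
  (-(sharp h hh u.2), h u.1)

/-- For a nondegenerate symmetric bilinear form `g`, the endomorphism `𝒥_g` squares to `-id`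
and is symmetric with respect to `G₀`; in particular if `V ≠ 0` it is not strong. -/
theorem Jform_symm_sq_and_not_strong (g : LinearMap.BilinForm ℝ V) (hg : g.Nondegenerate)
    (hsym : ∀ X Y : V, g X Y = g Y X) :
    (∀ u : V × Module.Dual ℝ V, Jform g hg (Jform g hg u) = -u) ∧
    (∀ u v : V × Module.Dual ℝ V, Gz (Jform g hg u) v = Gz u (Jform g hg v)) ∧
    (Nontrivial V →
      ¬ (∀ u v : V × Module.Dual ℝ V, Gz (Jform g hg u) v = -Gz u (Jform g hg v))) := by
  have hsf : ∀ X : V, sharp g hg (g X) = X := fun X =>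
    (LinearMap.BilinForm.toDual g hg).symm_apply_apply X
  have hfs : ∀ ξ : Module.Dual ℝ V, g (sharp g hg ξ) = ξ := fun ξ =>
    (LinearMap.BilinForm.toDual g hg).apply_symm_apply ξ
  refine ⟨?_, ?_, ?_⟩
  · intro u
    simp [Jform, hsf, hfs, Prod.ext_iff, map_neg]
  · intro u v
    have h1 : v.2 (sharp g hg u.2) = u.2 (sharp g hg v.2) := by
      conv_lhs => rw [← hfs v.2]
      conv_rhs => rw [← hfs u.2]
      exact hsym _ _
    simp only [Gz, Jform, map_neg, LinearMap.neg_apply]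
    rw [h1, hsym]
    ring
  · intro hnt hstrong
    -- strong would force Gz (J u) u = 0 for all u; apply to (X, 0).
    have hzero : ∀ X : V, g X X = 0 := by
      intro X
      have := hstrong (X, 0) (X, 0)
      simp only [Gz, Jform, map_zero, neg_zero, LinearMap.neg_apply] at this
      -- this : (g X X + 0)/2 = -((0 + g X X)/2) roughly
      have h2 : g X X / 2 = -(g X X / 2) := by
        convert this using 2 <;> simp
      linarith
    have hg0 : ∀ X Y : V, g X Y = 0 := by
      intro X Y
      have h := hzero (X + Y)
      simp only [map_add, LinearMap.add_apply] at h
      rw [hzero X, hzero Y, hsym Y X] at h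
      linarith
    obtain ⟨X, hX⟩ := exists_ne (0 : V)
    exact hX (hg.1 X (fun Y => hg0 X Y))

end
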